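/- Let τ > 0, ε ≥ 0, 0 ≤ η < 1 with τε ≤ 1, speed limits v_min ≤ v_max, and acceleration limits a_min ≤ a_max satisfying ε·v_max − η·a_max > (1 − η)·a_min. If v ≤ v_max and u_prev ≤ a_max, then a_hi = (v_max − (1 − τε)v − τη·u_prev)/(τ(1 − η)) satisfies a_hi > a_min. -/
import Mathlib

/-- the upper speed-limit control bound `a_hi` is strictly
above the minimum acceleration `a_min`. -/
theorem a_hi_gt_a_min
    (τ ε η vmin vmax amin amax v uprev : ℝ)
    (hτ : 0 < τ) (hε : 0 ≤ ε) (hη0 : 0 ≤ η) (hη1 : η < 1)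
    (hτε : τ * ε ≤ 1) (hv : vmin ≤ vmax) (ha : amin ≤ amax)
    (hcond : ε * vmax - η * amax > (1 - η) * amin)
    (hvub : v ≤ vmax) (huprev : uprev ≤ amax) :
    (vmax - (1 - τ * ε) * v - τ * η * uprev) / (τ * (1 - η)) > amin := by
  rw [gt_iff_lt, lt_div_iff₀ (by nlinarith)]
  nlinarith [mul_nonneg (by linarith : (0:ℝ) ≤ 1 - τ * ε) (by linarith : (0:ℝ) ≤ vmax - v),
    mul_nonneg (mul_nonneg hτ.le hη0) (by linarith : (0:ℝ) ≤ amax - uprev),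
    mul_lt_mul_of_pos_left hcond hτ]
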